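/- A bounded convex polygon in the plane with k vertices cannot be expressed as an intersection of fewer than k closed halfplanes. -/

import Mathlib

lemma stmt12_rep (φ : (ℝ × ℝ) →ₗ[ℝ] ℝ) (x : ℝ × ℝ) :
    φ x = x.1 * φ (1, 0) + x.2 * φ (0, 1) := by
  have hx : x = x.1 • ((1 : ℝ), (0 : ℝ)) + x.2 • ((0 : ℝ), (1 : ℝ)) := by
    simp [Prod.ext_iff]
  conv_lhs => rw [hx]
  rw [map_add, map_smul, map_smul]
  simp

lemma stmt12_ker (φ : (ℝ × ℝ) →ₗ[ℝ] ℝ) : ∃ d : ℝ × ℝ, d ≠ 0 ∧ φ d = 0 := by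
  by_cases h : φ = 0
  · exact ⟨(1, 0), by simp [Prod.ext_iff], by simp [h]⟩
  · refine ⟨(-φ (0, 1), φ (1, 0)), ?_, ?_⟩
    · intro hd
      apply h
      apply LinearMap.ext
      intro x
      rw [Prod.ext_iff] at hd
      simp only [Prod.fst, Prod.snd, neg_eq_zero] at hd
      rw [stmt12_rep φ x]
      simp only [LinearMap.zero_apply]
      have h1 : φ (1, 0) = 0 := hd.2
      have h2 : φ (0, 1) = 0 := by
        have := hd.1
        simpa using this
      rw [h1, h2]; ring
    · rw [stmt12_rep]
      simp only []
      ring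

lemma stmt12_dep (φ : (ℝ × ℝ) →ₗ[ℝ] ℝ) (hφ : φ ≠ 0) (a b : ℝ × ℝ)
    (ha : φ a = 0) (hb : φ b = 0) (ha0 : a ≠ 0) : ∃ r : ℝ, b = r • a := by
  set P := φ (1, 0) with hP
  set Q := φ (0, 1) with hQ
  have hPQ : P ≠ 0 ∨ Q ≠ 0 := by
    by_contra hc
    push_neg at hc
    apply hφ
    apply LinearMap.ext
    intro x
    rw [stmt12_rep φ x, ← hP, ← hQ, hc.1, hc.2]
    simp
  rw [stmt12_rep φ a, ← hP, ← hQ] at ha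
  rw [stmt12_rep φ b, ← hP, ← hQ] at hb
  have hcross : a.1 * b.2 - a.2 * b.1 = 0 := by
    rcases hPQ with hp | hq
    · exact mul_left_cancel₀ hp (by linear_combination b.2 * ha - a.2 * hb)
    · exact mul_left_cancel₀ hq (by linear_combination a.1 * hb - b.1 * ha)
  by_cases h1 : a.1 = 0
  · have h2 : a.2 ≠ 0 := fun h2 => ha0 (Prod.ext h1 h2)
    have hb1 : b.1 = 0 := by
      have : a.2 * b.1 = 0 := by rw [h1] at hcross; linarith
      rcases mul_eq_zero.1 this with h | h
      · exact absurd h h2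
      · exact h
    refine ⟨b.2 / a.2, Prod.ext ?_ ?_⟩
    · simp [Prod.smul_fst, h1, hb1]
    · simp [Prod.smul_snd]; field_simp
  · refine ⟨b.1 / a.1, Prod.ext ?_ ?_⟩
    · simp [Prod.smul_fst]; field_simp
    · simp [Prod.smul_snd]
      field_simp
      linear_combination hcross

lemma stmt12_extreme (V : Finset (ℝ × ℝ)) (v p q : ℝ × ℝ) (hv : v ∈ V)
    (hp : p ∈ convexHull ℝ (V : Set (ℝ × ℝ))) (hq : q ∈ convexHull ℝ (V : Set (ℝ × ℝ)))
    (hpv : p ≠ v) (hmid : p + q = v + v) :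
    v ∈ convexHull ℝ ((V.erase v : Finset (ℝ × ℝ)) : Set (ℝ × ℝ)) := by
  classical
  set s : Set (ℝ × ℝ) := ((V.erase v : Finset (ℝ × ℝ)) : Set (ℝ × ℝ)) with hs_def
  have hins : (V : Set (ℝ × ℝ)) = insert v s := by
    rw [hs_def, ← Finset.coe_insert, Finset.insert_erase hv]
  by_cases hs : s.Nonempty
  · rw [hins, convexHull_insert hs] at hp hq
    rw [mem_convexJoin] at hp hq
    obtain ⟨v', hv', z, hz, hpseg⟩ := hp
    obtain ⟨v'', hv'', w, hw, hqseg⟩ := hq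
    rw [Set.mem_singleton_iff] at hv' hv''
    obtain ⟨c, a, hc0, ha0, hca, hpe⟩ := hpseg
    obtain ⟨d, b, hd0, hb0, hdb, hqe⟩ := hqseg
    rw [hv'] at hpe
    rw [hv''] at hqe
    have hane : a ≠ 0 := by
      intro h
      apply hpv
      rw [← hpe, h]
      have : c = 1 := by linarith
      simp [this]
    have hkey : a • z + b • w = (a + b) • v := by
      have h2 : a • z + b • w = (v + v) - c • v - d • v := by
        rw [← hmid, ← hpe, ← hqe]; abel
      have hc : c = 1 - a := by linarith
      have hd : d = 1 - b := by linarith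
      rw [h2, hc, hd]
      module
    have hab : 0 < a + b := by
      rcases lt_or_eq_of_le ha0 with h | h
      · linarith
      · exact absurd h.symm hane
    have hcomb : ((a + b)⁻¹ * a) • z + ((a + b)⁻¹ * b) • w = v := by
      rw [← smul_smul, ← smul_smul, ← smul_add, hkey, smul_smul,
        inv_mul_cancel₀ hab.ne', one_smul]
    rw [← hcomb]
    exact (convex_convexHull ℝ s) hz hw (by positivity) (by positivity)
      (by field_simp)
  · exfalso
    rw [Set.not_nonempty_iff_eq_empty] at hs
    have : (V : Set (ℝ × ℝ)) = {v} := by rw [hins, hs, LawfulSingleton.insert_empty_eq]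
    rw [this, convexHull_singleton] at hp
    exact hpv hp

lemma stmt12_wbtw (V : Finset (ℝ × ℝ))
    (hvert : ∀ v ∈ V, v ∉ convexHull ℝ ((V.erase v : Finset (ℝ × ℝ)) : Set (ℝ × ℝ)))
    (x y z : ℝ × ℝ) (hx : x ∈ V) (hy : y ∈ V) (hz : z ∈ V)
    (hxy : x ≠ y) (hzy : z ≠ y) (h : Wbtw ℝ x y z) : False := by
  refine hvert y hy (segment_subset_convexHull ?_ ?_ h.mem_segment)
  · exact Finset.mem_coe.2 (Finset.mem_erase.2 ⟨hxy, hx⟩)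
  · exact Finset.mem_coe.2 (Finset.mem_erase.2 ⟨hzy, hz⟩)

lemma stmt12_three (V : Finset (ℝ × ℝ))
    (hvert : ∀ v ∈ V, v ∉ convexHull ℝ ((V.erase v : Finset (ℝ × ℝ)) : Set (ℝ × ℝ)))
    (f : (ℝ × ℝ) →ᵃ[ℝ] ℝ) (hlin : f.linear ≠ 0)
    (u v w : ℝ × ℝ) (hu : u ∈ V) (hv : v ∈ V) (hw : w ∈ V)
    (huv : u ≠ v) (huw : u ≠ w) (hvw : v ≠ w)
    (hfu : f u = 0) (hfv : f v = 0) (hfw : f w = 0) : False := by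
  have ha : f.linear (u - v) = 0 := by
    have := f.linearMap_vsub u v
    rw [vsub_eq_sub] at this
    rw [this, hfu, hfv]; simp
  have hb : f.linear (w - v) = 0 := by
    have := f.linearMap_vsub w v
    rw [vsub_eq_sub] at this
    rw [this, hfw, hfv]; simp
  have ha0 : u - v ≠ 0 := sub_ne_zero.2 huv
  obtain ⟨r, hr⟩ := stmt12_dep f.linear hlin (u - v) (w - v) ha hb ha0
  have hcol : Collinear ℝ ({u, v, w} : Set (ℝ × ℝ)) := by
    rw [collinear_iff_of_mem (Set.mem_insert_of_mem _ (Set.mem_insert _ _))]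
    refine ⟨u - v, ?_⟩
    intro p hp
    rcases hp with rfl | rfl | rfl
    · exact ⟨1, by simp⟩
    · exact ⟨0, by simp⟩
    · exact ⟨r, by rw [← hr]; simp⟩
  rcases hcol.wbtw_or_wbtw_or_wbtw with h | h | h
  · exact stmt12_wbtw V hvert u v w hu hv hw huv hvw.symm h
  · exact stmt12_wbtw V hvert v w u hv hw hu hvw huw h
  · exact stmt12_wbtw V hvert w u v hw hu hv huw.symm huv.symm h
/-- A bounded convex polygon in the plane with `k` vertices (the convex hull of `k` points,
none of which lies in the convex hull of the others) cannot be expressed as an intersection of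
fewer than `k` closed halfplanes. -/
theorem stmt12 (V : Finset (ℝ × ℝ)) (k : ℕ) (hcard : V.card = k)
    (hvert : ∀ v ∈ V, v ∉ convexHull ℝ ((V.erase v : Finset (ℝ × ℝ)) : Set (ℝ × ℝ)))
    (H : Finset ((ℝ × ℝ) →ᵃ[ℝ] ℝ))
    (hinter : ⋂ f ∈ H, {x : ℝ × ℝ | 0 ≤ f x} = convexHull ℝ (V : Set (ℝ × ℝ))) :
    k ≤ H.card := by
  classical
  subst hcard
  have hmem : ∀ x : ℝ × ℝ, x ∈ convexHull ℝ (V : Set (ℝ × ℝ)) ↔ ∀ f ∈ H, 0 ≤ f x := by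
    intro x
    rw [← hinter]
    simp [Set.mem_iInter]
  set H' := H.filter (fun f => f.linear ≠ 0) with hH'
  have hB : ∀ f ∈ H', (V.filter (fun x => f x = 0)).card ≤ 2 := by
    intro f hf
    by_contra hc
    push_neg at hc
    obtain ⟨u, hu, v, hv, w, hw, huv, huw, hvw⟩ := Finset.two_lt_card.1 hc
    simp only [Finset.mem_filter] at hu hv hw
    exact stmt12_three V hvert f (Finset.mem_filter.1 hf).2 u v w hu.1 hv.1 hw.1
      huv huw hvw hu.2 hv.2 hw.2
  have hA : ∀ v ∈ V, 2 ≤ (H'.filter (fun g => g v = 0)).card := by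
    intro v hvV
    by_contra hc
    push_neg at hc
    have hle1 : (H'.filter (fun g => g v = 0)).card ≤ 1 := by omega
    have hdd : ∃ d : ℝ × ℝ, d ≠ 0 ∧
        ∀ f ∈ H'.filter (fun g => g v = 0), f.linear d = 0 := by
      rcases (H'.filter (fun g => g v = 0)).eq_empty_or_nonempty with he | ⟨g, hg⟩
      · exact ⟨(1, 0), by simp [Prod.ext_iff], by simp [he]⟩
      · obtain ⟨d, hd0, hdg⟩ := stmt12_ker g.linear
        refine ⟨d, hd0, fun f hf => ?_⟩
        rw [Finset.card_le_one.1 hle1 f hf g hg]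
        exact hdg
    obtain ⟨d, hd0, hd⟩ := hdd
    have hee : ∃ ε : ℝ, 0 < ε ∧ ∀ f ∈ H, 0 < f v → ε * |f.linear d| ≤ f v := by
      rcases (H.filter (fun g => 0 < g v)).eq_empty_or_nonempty with he | hne
      · refine ⟨1, one_pos, fun f hf hfv => ?_⟩
        exfalso
        have hmf : f ∈ H.filter (fun g => 0 < g v) := Finset.mem_filter.2 ⟨hf, hfv⟩
        rw [he] at hmf
        exact Finset.notMem_empty f hmf
      · refine ⟨(H.filter (fun g => 0 < g v)).inf' hne (fun g => g v / (|g.linear d| + 1)),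
          ?_, ?_⟩
        · rw [Finset.lt_inf'_iff]
          intro f hf
          have h2 := (Finset.mem_filter.1 hf).2
          positivity
        · intro f hf hfv
          have hmf : f ∈ H.filter (fun g => 0 < g v) := Finset.mem_filter.2 ⟨hf, hfv⟩
          have hle := Finset.inf'_le (fun g => g v / (|g.linear d| + 1)) hmf
          have h1 : (0:ℝ) < |f.linear d| + 1 := by positivity
          calc (H.filter (fun g => 0 < g v)).inf' hne (fun g => g v / (|g.linear d| + 1))
                * |f.linear d|
              ≤ (f v / (|f.linear d| + 1)) * |f.linear d| :=
                mul_le_mul_of_nonneg_right hle (abs_nonneg _)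
            _ ≤ f v := by
                rw [div_mul_eq_mul_div, div_le_iff₀ h1]
                nlinarith [abs_nonneg (f.linear d)]
    obtain ⟨ε, hε, hεb⟩ := hee
    have hvh : v ∈ convexHull ℝ (V : Set (ℝ × ℝ)) := subset_convexHull ℝ _ hvV
    have hval : ∀ (t : ℝ) (f : (ℝ × ℝ) →ᵃ[ℝ] ℝ), f (v + t • d) = f v + t * f.linear d := by
      intro t f
      have h := f.map_vadd v (t • d)
      rw [vadd_eq_add, map_smul] at h
      rw [add_comm v (t • d), h]
      simp [vadd_eq_add, add_comm, smul_eq_mul]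
    have hup : ∀ f ∈ H, 0 ≤ f (v + ε • d) ∧ 0 ≤ f (v + (-ε) • d) := by
      intro f hf
      have h0 : 0 ≤ f v := (hmem v).1 hvh f hf
      by_cases hpos : 0 < f v
      · have hb := hεb f hf hpos
        have habs : |ε * f.linear d| ≤ f v := by
          rw [abs_mul, abs_of_pos hε]; exact hb
        have habs' := abs_le.1 habs
        constructor <;> rw [hval] <;> nlinarith [habs'.1, habs'.2]
      · have hfv0 : f v = 0 := le_antisymm (not_lt.1 hpos) h0
        by_cases hl : f.linear = 0
        · constructor <;> rw [hval, hl] <;> simp [hfv0]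
        · have hfH' : f ∈ H'.filter (fun g => g v = 0) :=
            Finset.mem_filter.2 ⟨Finset.mem_filter.2 ⟨hf, hl⟩, hfv0⟩
          have hlin0 := hd f hfH'
          constructor <;> rw [hval, hlin0] <;> simp [hfv0]
    have hp : (v + ε • d) ∈ convexHull ℝ (V : Set (ℝ × ℝ)) :=
      (hmem _).2 (fun f hf => (hup f hf).1)
    have hq : (v + (-ε) • d) ∈ convexHull ℝ (V : Set (ℝ × ℝ)) :=
      (hmem _).2 (fun f hf => (hup f hf).2)
    refine hvert v hvV (stmt12_extreme V v _ _ hvV hp hq ?_ ?_)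
    · intro h
      have : ε • d = 0 := by
        have := congrArg (fun x => x - v) h
        simpa [add_sub_cancel_left] using this
      rcases smul_eq_zero.1 this with h' | h'
      · exact hε.ne' h'
      · exact hd0 h'
    · module
  have hswap : ∑ v ∈ V, (H'.filter (fun g => g v = 0)).card
      = ∑ f ∈ H', (V.filter (fun x => f x = 0)).card := by
    simp_rw [Finset.card_filter]
    exact Finset.sum_comm
  have h1 : 2 * V.card ≤ ∑ v ∈ V, (H'.filter (fun g => g v = 0)).card := by
    have : ∑ v ∈ V, 2 ≤ ∑ v ∈ V, (H'.filter (fun g => g v = 0)).card :=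
      Finset.sum_le_sum hA
    simpa [Finset.sum_const, mul_comm] using this
  have h2 : ∑ f ∈ H', (V.filter (fun x => f x = 0)).card ≤ 2 * H'.card := by
    have : ∑ f ∈ H', (V.filter (fun x => f x = 0)).card ≤ ∑ f ∈ H', 2 :=
      Finset.sum_le_sum hB
    simpa [Finset.sum_const, mul_comm] using this
  have h3 : H'.card ≤ H.card := Finset.card_filter_le _ _
  omega
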